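/- If a discrete Bayesian large-sample estimation problem has distinctive likelihoods, then every Maximum Likelihood estimator for it (whenever one exists for each n) is strongly consistent. -/

import Mathlib

open MeasureTheory ProbabilityTheory Filter Set Topology
open scoped ENNReal

/-- The cylinder event determined by the first `n` observations of `ω`. -/
def cylinder {Θ : Type*} {X : ℕ → Type*} (n : ℕ) (ω : Θ × (∀ i, X i)) :
    Set (Θ × (∀ i, X i)) :=
  {ω' | ∀ i < n, ω'.2 i = ω.2 i}

/-- If a discrete Bayesian large-sample estimation problem has distinctive likelihoods, then
every Maximum Likelihood estimator for it is strongly consistent. -/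
theorem ml_strongly_consistent_of_distinctive_likelihoods
    {Θ : Type*} [Countable Θ] [MeasurableSpace Θ] [DiscreteMeasurableSpace Θ]
    [TopologicalSpace Θ] [T1Space Θ] [FirstCountableTopology Θ]
    {X : ℕ → Type*} [∀ n, Countable (X n)] [∀ n, MeasurableSpace (X n)]
    [∀ n, DiscreteMeasurableSpace (X n)]
    (μ : Measure (Θ × (∀ i, X i))) [IsProbabilityMeasure μ]
    (hprior : ∀ θ : Θ, 0 < μ (Prod.fst ⁻¹' {θ}))
    -- distinctive likelihoods
    (hdl : ∀ θ : Θ, ∀ U ∈ 𝓝 θ,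
        ∀ᵐ ω ∂(μ[|Prod.fst ⁻¹' {θ}]),
          limsup
            (fun n : ℕ =>
              (⨆ θ' ∈ Uᶜ, (μ[|Prod.fst ⁻¹' {θ'}]) (cylinder n ω)) /
                ⨆ θtilde ∈ U, (μ[|Prod.fst ⁻¹' {θtilde}]) (cylinder n ω))
            atTop < 1)
    -- a Maximum Likelihood estimator
    (est : (n : ℕ) → (∀ i, X i) → Θ)
    (hdep : ∀ n (x y : ∀ i, X i), (∀ i < n, x i = y i) → est n x = est n y)
    (hML : ∀ (n : ℕ) (ω : Θ × (∀ i, X i)) (θ₀ : Θ),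
        (μ[|Prod.fst ⁻¹' {θ₀}]) (cylinder n ω) ≤
          (μ[|Prod.fst ⁻¹' {est n ω.2}]) (cylinder n ω)) :
    ∀ θ : Θ, ∀ᵐ ω ∂(μ[|Prod.fst ⁻¹' {θ}]),
        Tendsto (fun n : ℕ => est n ω.2) atTop (𝓝 θ) := by
  intro θ
  obtain ⟨U, hU⟩ := (𝓝 θ).exists_antitone_basis
  set ν : Θ → Measure (Θ × (∀ i, X i)) := fun θ' => μ[|Prod.fst ⁻¹' {θ'}] with hνdef
  have hprob : ∀ θ' : Θ, IsProbabilityMeasure (ν θ') := fun θ' =>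
    cond_isProbabilityMeasure (hprior θ').ne'
  -- a.s. positivity of the likelihood of the observed cylinder
  have hpos : ∀ n : ℕ, ∀ᵐ ω ∂(ν θ), ν θ (cylinder n ω) ≠ 0 := by
    intro n
    set r : (Θ × ∀ i, X i) → (∀ i : Fin n, X i) := fun ω i => ω.2 i with hr
    have hcyl : ∀ ω, cylinder n ω = r ⁻¹' {r ω} := by
      intro ω
      ext ω'
      simp only [_root_.cylinder, mem_setOf_eq, mem_preimage, mem_singleton_iff, funext_iff, hr]
      constructor
      · intro h i; exact h i i.2
      · intro h i hi; exact h ⟨i, hi⟩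
    rw [ae_iff]
    have hsub : {ω | ¬ ν θ (cylinder n ω) ≠ 0} ⊆
        ⋃ t ∈ {t | ν θ (r ⁻¹' {t}) = 0}, r ⁻¹' {t} := by
      intro ω hω
      simp only [mem_setOf_eq, not_not, hcyl ω] at hω
      exact mem_biUnion hω rfl
    refine measure_mono_null hsub ?_
    rw [measure_biUnion_null_iff (Set.to_countable _)]
    exact fun t ht => ht
  have hae : ∀ᵐ ω ∂(ν θ), (∀ n, ν θ (cylinder n ω) ≠ 0) ∧
      ∀ k, limsup (fun n : ℕ => (⨆ θ' ∈ (U k)ᶜ, ν θ' (cylinder n ω)) /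
        ⨆ θt ∈ U k, ν θt (cylinder n ω)) atTop < 1 :=
    (ae_all_iff.2 hpos).and (ae_all_iff.2 fun k => hdl θ (U k) (hU.1.mem_of_mem trivial))
  filter_upwards [hae] with ω hω
  refine hU.1.tendsto_right_iff.mpr fun k _ => ?_
  filter_upwards [eventually_lt_of_limsup_lt (hω.2 k)] with n hn
  by_contra hnot
  set d := ⨆ θt ∈ U k, ν θt (cylinder n ω) with hd
  have hθU : θ ∈ U k := mem_of_mem_nhds (hU.1.mem_of_mem (trivial : True))
  have hd0 : ν θ (cylinder n ω) ≤ d :=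
    le_iSup₂ (f := fun θt (_ : θt ∈ U k) => ν θt (cylinder n ω)) θ hθU
  have hdle : d ≤ ν (est n ω.2) (cylinder n ω) := iSup₂_le fun θt _ => hML n ω θt
  have hnum : d ≤ ⨆ θ' ∈ (U k)ᶜ, ν θ' (cylinder n ω) :=
    hdle.trans (le_iSup₂ (f := fun θ' (_ : θ' ∈ (U k)ᶜ) => ν θ' (cylinder n ω))
      (est n ω.2) hnot)
  have hdne : d ≠ 0 := fun h => hω.1 n (le_antisymm (h ▸ hd0) zero_le)
  have hdtop : d ≠ ⊤ := by
    have := hprob (est n ω.2)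
    exact (hdle.trans (prob_le_one)).trans_lt (by norm_num) |>.ne
  have h1 : (1 : ℝ≥0∞) ≤ (⨆ θ' ∈ (U k)ᶜ, ν θ' (cylinder n ω)) / d := by
    rw [ENNReal.le_div_iff_mul_le (Or.inl hdne) (Or.inl hdtop), one_mul]
    exact hnum
  exact absurd hn (not_lt.2 h1)
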